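/- Let σ ≥ 0 and let μ be a finite positive Borel measure on [0,1) satisfying μ([x,1)) ≤ K(1−x)^σ for some constant K < ∞ and all x ∈ [0,1). Then ∫_{[1/2,1)} (1−x)^2 e^{−m(1−x)} dμ(x) = O(m^{−(2+σ)}) as m → ∞; i.e., there exist C < ∞ and m₀ such that this integral is at most C m^{−(2+σ)} for all real m ≥ m₀. -/

import Mathlib

open MeasureTheory Real Set

lemma exp_neg_le_rpow (q : ℝ) (hq : 0 ≤ q) {u : ℝ} (hu : 0 < u) :
    Real.exp (-u) ≤ (Nat.ceil q).factorial * u ^ (-q) := by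
  have hNpos : (0:ℝ) < (Nat.ceil q).factorial := by positivity
  have h1 : u ^ q ≤ (Nat.ceil q).factorial * Real.exp u := by
    rcases le_total u 1 with h | h
    · have h2 : u ^ q ≤ 1 := Real.rpow_le_one hu.le h hq
      have h3 : (1:ℝ) ≤ Real.exp u := Real.one_le_exp hu.le
      have h4 : (1:ℝ) ≤ (Nat.ceil q).factorial := by
        exact_mod_cast Nat.one_le_iff_ne_zero.mpr (Nat.factorial_ne_zero _)
      nlinarith
    · calc u ^ q ≤ u ^ ((Nat.ceil q : ℝ)) := Real.rpow_le_rpow_of_exponent_le h (Nat.le_ceil q)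
        _ = u ^ (Nat.ceil q) := Real.rpow_natCast u _
        _ ≤ (Nat.ceil q).factorial * Real.exp u := by
            have h5 := Real.pow_div_factorial_le_exp u (le_of_lt hu) (Nat.ceil q)
            rw [div_le_iff₀ hNpos] at h5
            linarith
  have hupos : 0 < u ^ q := Real.rpow_pos_of_pos hu q
  rw [Real.exp_neg, Real.rpow_neg hu.le]
  calc (Real.exp u)⁻¹ ≤ (u ^ q / (Nat.ceil q).factorial)⁻¹ := by
        apply inv_anti₀ (by positivity)
        rw [div_le_iff₀ hNpos]
        nlinarith [Real.exp_pos u]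
    _ = (Nat.ceil q).factorial * (u ^ q)⁻¹ := by rw [inv_div]; ring

theorem integral_holder_decay
    (σ : ℝ) (hσ : 0 ≤ σ)
    (μ : Measure ℝ) [IsFiniteMeasure μ] (hμ : μ (Set.Ico (0:ℝ) 1)ᶜ = 0)
    (K : ℝ) (hK : ∀ x ∈ Set.Ico (0:ℝ) 1, μ (Set.Ico x 1) ≤ ENNReal.ofReal (K * (1 - x) ^ σ)) :
    ∃ C : ℝ, ∃ m₀ : ℝ, ∀ m : ℝ, m₀ ≤ m →
      (∫ x in Set.Ico (1/2 : ℝ) 1, (1 - x) ^ 2 * Real.exp (-(m * (1 - x))) ∂μ)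
        ≤ C * m ^ (-(2 + σ)) := by
  classical
  set K' := max K 0 with hK'def
  have hK'0 : 0 ≤ K' := le_max_right K 0
  have hK' : ∀ x ∈ Set.Ico (0:ℝ) 1, μ (Set.Ico x 1) ≤ ENNReal.ofReal (K' * (1 - x) ^ σ) := by
    intro x hx
    refine (hK x hx).trans (ENNReal.ofReal_le_ofReal ?_)
    exact mul_le_mul_of_nonneg_right (le_max_left K 0)
      (Real.rpow_nonneg (by linarith [hx.2]) σ)
  set q : ℝ := σ + 3 with hqdef
  have hq0 : 0 ≤ q := by linarith
  set c : ℝ := ((Nat.ceil q).factorial : ℝ) with hcdef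
  have hc0 : (0:ℝ) < c := by positivity
  have hσ1 : (0:ℝ) < σ + 1 := by linarith
  set p : ℝ := σ / (σ + 1) with hpdef
  have hp0 : 0 ≤ p := div_nonneg hσ hσ1.le
  have hp1 : p < 1 := (div_lt_one hσ1).mpr (by linarith)
  have h1p : 1 - p = 1 / (σ + 1) := by rw [hpdef]; field_simp; ring
  refine ⟨K' * c ^ p * 2 ^ (1 - p) * (σ + 1), 1, fun m hm => ?_⟩
  have hm0 : (0:ℝ) < m := lt_of_lt_of_le one_pos hm
  set D : ℝ := c * m ^ (-q) with hDdef
  have hD0 : 0 < D := mul_pos hc0 (Real.rpow_pos_of_pos hm0 _)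
  set S : ℝ := 2 * m ^ (-(2:ℝ)) with hSdef
  have hS0 : 0 < S := mul_pos two_pos (Real.rpow_pos_of_pos hm0 _)
  set f : ℝ → ℝ := fun x => (1 - x) ^ 2 * Real.exp (-(m * (1 - x))) with hfdef
  have hfmeas : Measurable f := by fun_prop
  have hfnn : ∀ x, 0 ≤ f x := fun x => mul_nonneg (sq_nonneg _) (Real.exp_pos _).le
  -- pointwise bounds on Ico (1/2) 1
  have key1 : ∀ x ∈ Set.Ico (1/2:ℝ) 1, f x ≤ S := by
    intro x hx
    have ht0 : 0 < 1 - x := by linarith [hx.2]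
    have hu0 : 0 < m * (1 - x) := mul_pos hm0 ht0
    have e1 : Real.exp (-(m * (1 - x))) ≤ 2 * (m * (1 - x)) ^ (-(2:ℝ)) := by
      have h6 := exp_neg_le_rpow 2 (by norm_num) hu0
      have h7 : ((Nat.ceil (2:ℝ)).factorial : ℝ) = 2 := by
        rw [show Nat.ceil (2:ℝ) = 2 by norm_num]
        norm_num [Nat.factorial]
      rwa [h7] at h6
    calc f x ≤ (1 - x) ^ 2 * (2 * (m * (1 - x)) ^ (-(2:ℝ))) :=
          mul_le_mul_of_nonneg_left e1 (sq_nonneg _)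
      _ = S := by
          rw [Real.mul_rpow hm0.le ht0.le, ← Real.rpow_natCast (1 - x) 2]
          push_cast
          rw [show ((1:ℝ) - x) ^ (2:ℝ) * (2 * (m ^ (-(2:ℝ)) * (1 - x) ^ (-(2:ℝ))))
              = 2 * m ^ (-(2:ℝ)) * ((1 - x) ^ (2:ℝ) * (1 - x) ^ (-(2:ℝ))) by ring,
            ← Real.rpow_add ht0]
          norm_num
          rw [hSdef, Real.rpow_neg hm0.le, Real.rpow_two]
  have key2 : ∀ x ∈ Set.Ico (1/2:ℝ) 1, f x ≤ D * (1 - x) ^ (-(σ+1)) := by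
    intro x hx
    have ht0 : 0 < 1 - x := by linarith [hx.2]
    have hu0 : 0 < m * (1 - x) := mul_pos hm0 ht0
    have e1 : Real.exp (-(m * (1 - x))) ≤ c * (m * (1 - x)) ^ (-q) :=
      exp_neg_le_rpow q hq0 hu0
    calc f x ≤ (1 - x) ^ 2 * (c * (m * (1 - x)) ^ (-q)) :=
          mul_le_mul_of_nonneg_left e1 (sq_nonneg _)
      _ = D * (1 - x) ^ (-(σ+1)) := by
          rw [Real.mul_rpow hm0.le ht0.le, ← Real.rpow_natCast (1 - x) 2]
          push_cast
          rw [show ((1:ℝ) - x) ^ (2:ℝ) * (c * (m ^ (-q) * (1 - x) ^ (-q)))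
              = c * m ^ (-q) * ((1 - x) ^ (2:ℝ) * (1 - x) ^ (-q)) by ring,
            ← Real.rpow_add ht0]
          rw [show (2:ℝ) + -q = -(σ+1) by rw [hqdef]; ring]
  set ν := μ.restrict (Set.Ico (1/2:ℝ) 1) with hνdef
  have step1 : (∫ x in Set.Ico (1/2:ℝ) 1, f x ∂μ)
      = (∫⁻ x, ENNReal.ofReal (f x) ∂ν).toReal :=
    integral_eq_lintegral_of_nonneg_ae (Filter.Eventually.of_forall hfnn)
      hfmeas.aestronglyMeasurable
  have step2 : ∫⁻ x, ENNReal.ofReal (f x) ∂ν = ∫⁻ s in Set.Ioi (0:ℝ), ν {a | s < f a} :=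
    lintegral_eq_lintegral_meas_lt ν (Filter.Eventually.of_forall hfnn) hfmeas.aemeasurable
  set g : ℝ → ENNReal := fun s => ENNReal.ofReal (K' * D ^ p * s ^ (-p)) with hgdef
  have hgmeas : Measurable g := by fun_prop
  have tail : ∀ s ∈ Set.Ioi (0:ℝ), ν {a | s < f a} ≤ (Set.Ioc (0:ℝ) S).indicator g s := by
    intro s hs
    have hs0 : (0:ℝ) < s := hs
    have hmset : MeasurableSet {a : ℝ | s < f a} := measurableSet_lt measurable_const hfmeas
    rw [hνdef, Measure.restrict_apply hmset]
    by_cases hsS : s ≤ S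
    · rw [Set.indicator_of_mem (Set.mem_Ioc.mpr ⟨hs0, hsS⟩) g]
      set b : ℝ := (D / s) ^ ((σ+1)⁻¹) with hbdef
      have hb0 : 0 < b := Real.rpow_pos_of_pos (div_pos hD0 hs0) _
      have hsub : {a : ℝ | s < f a} ∩ Set.Ico (1/2:ℝ) 1
          ⊆ Set.Ico (1 - b) 1 ∩ Set.Ico (1/2:ℝ) 1 := by
        rintro a ⟨ha1, ha2⟩
        refine ⟨⟨?_, ha2.2⟩, ha2⟩
        have ht0 : 0 < 1 - a := by linarith [ha2.2]
        have hfa : s < D * (1 - a) ^ (-(σ+1)) := lt_of_lt_of_le ha1 (key2 a ha2)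
        have h8 : (1 - a) ^ (σ+1) < D / s := by
          rw [Real.rpow_neg ht0.le] at hfa
          rw [lt_div_iff₀ hs0]
          have h9 : 0 < (1-a) ^ (σ+1) := Real.rpow_pos_of_pos ht0 _
          calc (1-a)^(σ+1) * s < (1-a)^(σ+1) * (D * ((1-a)^(σ+1))⁻¹) :=
                mul_lt_mul_of_pos_left hfa h9
            _ = D := by field_simp
        have h11 : ((1 - a) ^ (σ+1)) ^ ((σ+1)⁻¹) < b :=
          Real.rpow_lt_rpow (Real.rpow_nonneg ht0.le _) h8 (inv_pos.mpr hσ1)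
        rw [← Real.rpow_mul ht0.le, mul_inv_cancel₀ hσ1.ne', Real.rpow_one] at h11
        linarith
      have hbs : μ ({a : ℝ | s < f a} ∩ Set.Ico (1/2:ℝ) 1) ≤ ENNReal.ofReal (K' * b ^ σ) := by
        rcases le_total (1/2:ℝ) b with hb | hb
        · refine (measure_mono (fun a ha => (hsub ha).2)).trans
            ((hK' (1/2) (by norm_num)).trans (ENNReal.ofReal_le_ofReal ?_))
          refine mul_le_mul_of_nonneg_left ?_ hK'0
          rw [show (1:ℝ) - 1/2 = 1/2 by norm_num]
          exact Real.rpow_le_rpow (by norm_num) hb hσ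
        · have h1b : (1 - b) ∈ Set.Ico (0:ℝ) 1 := ⟨by linarith, by linarith⟩
          refine (measure_mono (fun a ha => (hsub ha).1)).trans
            ((hK' (1-b) h1b).trans (le_of_eq ?_))
          rw [show (1:ℝ) - (1 - b) = b by ring]
      refine hbs.trans (ENNReal.ofReal_le_ofReal (le_of_eq ?_))
      have hbσ : b ^ σ = D ^ p * s ^ (-p) := by
        rw [hbdef, ← Real.rpow_mul (div_pos hD0 hs0).le,
          show (σ+1)⁻¹ * σ = p by rw [hpdef, div_eq_mul_inv]; ring,
          Real.div_rpow hD0.le hs0.le, Real.rpow_neg hs0.le, div_eq_mul_inv]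
      rw [hbσ]; ring
    · have hempty : {a : ℝ | s < f a} ∩ Set.Ico (1/2:ℝ) 1 = ∅ := by
        ext a
        simp only [Set.mem_inter_iff, Set.mem_empty_iff_false, iff_false, not_and, Set.mem_setOf_eq]
        intro ha1 ha2
        exact hsS (le_of_lt (lt_of_lt_of_le ha1 (key1 a ha2)))
      rw [hempty, measure_empty]
      exact zero_le
  have step3 : ∫⁻ s in Set.Ioi (0:ℝ), ν {a | s < f a}
      ≤ ∫⁻ s in Set.Ioi (0:ℝ), (Set.Ioc (0:ℝ) S).indicator g s :=
    setLIntegral_mono (hgmeas.indicator measurableSet_Ioc) tail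
  have step4 : ∫⁻ s in Set.Ioi (0:ℝ), (Set.Ioc (0:ℝ) S).indicator g s
      = ∫⁻ s in Set.Ioc (0:ℝ) S, g s := by
    rw [lintegral_indicator measurableSet_Ioc, Measure.restrict_restrict measurableSet_Ioc,
      Set.inter_eq_left.mpr Set.Ioc_subset_Ioi_self]
  have hintg : IntegrableOn (fun s : ℝ => K' * D ^ p * s ^ (-p)) (Set.Ioc (0:ℝ) S) := by
    have hii : IntervalIntegrable (fun s : ℝ => s ^ (-p)) volume 0 S :=
      intervalIntegral.intervalIntegrable_rpow' (by linarith)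
    have h12 := hii.const_mul (K' * D ^ p)
    rw [intervalIntegrable_iff, Set.uIoc_of_le hS0.le] at h12
    exact h12.congr_fun (fun s _ => by ring) measurableSet_Ioc
  have step5 : ∫⁻ s in Set.Ioc (0:ℝ) S, g s
      = ENNReal.ofReal (∫ s in Set.Ioc (0:ℝ) S, K' * D ^ p * s ^ (-p)) := by
    refine (ofReal_integral_eq_lintegral_ofReal hintg ?_).symm
    filter_upwards [ae_restrict_mem measurableSet_Ioc] with s hs
    have hs0 : (0:ℝ) ≤ s := le_of_lt hs.1
    have : (0:ℝ) ≤ s ^ (-p) := Real.rpow_nonneg hs0 _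
    have hDp : (0:ℝ) ≤ D ^ p := Real.rpow_nonneg hD0.le _
    positivity
  have hval : ∫ s in Set.Ioc (0:ℝ) S, K' * D ^ p * s ^ (-p)
      = K' * D ^ p * (S ^ (1 - p) / (1 - p)) := by
    rw [← intervalIntegral.integral_of_le hS0.le, intervalIntegral.integral_const_mul,
      integral_rpow (Or.inl (by linarith : (-1:ℝ) < -p))]
    rw [Real.zero_rpow (by linarith : (0:ℝ) < -p + 1).ne', sub_zero,
      show -p + 1 = 1 - p by ring]
  have halg : K' * D ^ p * (S ^ (1 - p) / (1 - p))
      = (K' * c ^ p * 2 ^ (1 - p) * (σ + 1)) * m ^ (-(2+σ)) := by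
    have e1 : D ^ p = c ^ p * m ^ (-q * p) := by
      rw [hDdef, Real.mul_rpow hc0.le (Real.rpow_pos_of_pos hm0 _).le,
        ← Real.rpow_mul hm0.le]
    have e2 : S ^ (1 - p) = 2 ^ (1 - p) * m ^ (-2 * (1 - p)) := by
      rw [hSdef, Real.mul_rpow (by norm_num) (Real.rpow_pos_of_pos hm0 _).le,
        ← Real.rpow_mul hm0.le]
    have e3 : m ^ (-q * p) * m ^ (-2 * (1 - p)) = m ^ (-(2+σ)) := by
      rw [← Real.rpow_add hm0]
      congr 1
      rw [hqdef, hpdef]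
      field_simp
      ring
    have hinv : (1 - p)⁻¹ = σ + 1 := by rw [h1p, one_div, inv_inv]
    rw [e1, e2, div_eq_mul_inv, hinv]
    calc K' * (c^p * m^(-q*p)) * (2^(1-p) * m^(-2*(1-p)) * (σ+1))
        = (K' * c^p * 2^(1-p) * (σ+1)) * (m^(-q*p) * m^(-2*(1-p))) := by ring
      _ = _ := by rw [e3]
  have hfin : (∫ x in Set.Ico (1/2:ℝ) 1, f x ∂μ) ≤ K' * D ^ p * (S ^ (1 - p) / (1 - p)) := by
    rw [step1, step2]
    have hb : ∫⁻ s in Set.Ioi (0:ℝ), ν {a | s < f a}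
        ≤ ENNReal.ofReal (K' * D ^ p * (S ^ (1 - p) / (1 - p))) := by
      refine (step3.trans_eq (step4.trans step5)).trans (le_of_eq ?_)
      rw [hval]
    have h16 := ENNReal.toReal_mono ENNReal.ofReal_ne_top hb
    refine h16.trans (le_of_eq (ENNReal.toReal_ofReal ?_))
    have h13 : (0:ℝ) ≤ D ^ p := (Real.rpow_pos_of_pos hD0 _).le
    have h14 : (0:ℝ) ≤ S ^ (1-p) := (Real.rpow_pos_of_pos hS0 _).le
    have h15 : (0:ℝ) < 1 - p := by linarith
    positivity
  exact hfin.trans (le_of_eq halg)
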